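/- Let G = (V,E) be a graph and P_G the program from the W[1]-hardness reduction with parameter k. If G has an independent set of size k, then P_G has a sequentially consistent interleaving with at most 3k preemptions. -/

import Mathlib

/-- Memory events: reads and writes of natural-number values to variables of type `V`. -/
inductive Event (V : Type) where
  | read  (x : V) (d : ℕ)
  | write (x : V) (d : ℕ)
deriving DecidableEq

variable {V ι : Type}

/-- A sequence of events is sequentially consistent (SC): every read `r(x,d)` has a
preceding write `w(x,d)` with no write of a different value to `x` in between. -/
def SC (σ : List (Event V)) : Prop :=
  ∀ (p : ℕ) x d, σ[p]? = some (Event.read x d) →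
    ∃ q, q < p ∧ σ[q]? = some (Event.write x d) ∧
      ∀ r, q < r → r < p → ∀ d', d' ≠ d → σ[r]? ≠ some (Event.write x d')

/-- `σ` is an interleaving of the given threads: its restriction to each
thread identifier equals that thread's event sequence. -/
def IsInterleaving [DecidableEq ι] (threads : ι → List (Event V)) (σ : List (ι × Event V)) : Prop :=
  ∀ i, σ.filterMap (fun a => if a.1 = i then some a.2 else none) = threads i

/-- A preemption occurs at position `j`: the events at `j` and `j+1` are from
different threads and the event at `j` is not the last event of its thread. -/
def PreemptionAt (σ : List (ι × Event V)) (j : ℕ) : Prop :=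
  ∃ a b, σ[j]? = some a ∧ σ[j + 1]? = some b ∧ a.1 ≠ b.1 ∧
    ∃ r c, j < r ∧ σ[r]? = some c ∧ c.1 = a.1

open Classical in
/-- The number of preemption positions of `σ`. -/
noncomputable def numPreemptions (σ : List (ι × Event V)) : ℕ :=
  ((Finset.range σ.length).filter fun j => PreemptionAt σ j).card

open Classical in
/-- The number of context switches of `σ` (adjacent events of different threads). -/
noncomputable def numSwitches (σ : List (ι × Event V)) : ℕ :=
  ((Finset.range σ.length).filter fun j =>
    ∃ a b, σ[j]? = some a ∧ σ[j + 1]? = some b ∧ a.1 ≠ b.1).card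

/-- The (increasing) list of positions of `σ` carrying events of thread `i`. -/
def threadPositions [DecidableEq ι] (σ : List (ι × Event V)) (i : ι) : List ℕ :=
  (List.range σ.length).filter fun p => decide ((σ[p]?).map Prod.fst = some i)

/-- The position in `σ` of the `j`-th event of thread `i`. -/
def posOf [DecidableEq ι] (σ : List (ι × Event V)) (i : ι) (j : ℕ) : ℕ :=
  (threadPositions σ i).getD j 0

/-- All events of thread `t` occur before all events of thread `t'` in `σ`. -/
def ThreadBefore [DecidableEq ι] (σ : List (ι × Event V)) (t t' : ι) : Prop :=
  ∀ p ∈ threadPositions σ t, ∀ q ∈ threadPositions σ t', p < q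

/-- The event is a write to variable `x`. -/
def writesTo (x : V) : Event V → Prop
  | Event.write y _ => y = x
  | _ => False

/-- A 1-writer program: for each variable, a single thread performs all writes to it. -/
def OneWriter (threads : ι → List (Event V)) : Prop :=
  ∀ x i i', (∃ e ∈ threads i, writesTo x e) → (∃ e ∈ threads i', writesTo x e) → i = i'

/-- The events of thread `i` from its index `s` onwards appear contiguously in `σ`. -/
def ContiguousFrom [DecidableEq ι] (σ : List (ι × Event V)) (i : ι) (s : ℕ) : Prop :=
  ∀ j, s ≤ j → j + 1 < (threadPositions σ i).length → posOf σ i (j + 1) = posOf σ i j + 1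

/-- Conflict-graph edge `tr → tw` between outer blocks (suffixes of the threads
starting at indices `s tr`, `s tw`): the last write to some variable `x` in the
outer block of `tw` conflicts with a read of `x` in the outer block of `tr`. -/
def ConflictEdge [DecidableEq ι] (threads : ι → List (Event V)) (s : ι → ℕ) (tr tw : ι) : Prop :=
  tr ≠ tw ∧ ∃ x d d' jr jw, d ≠ d' ∧
    s tr ≤ jr ∧ (threads tr)[jr]? = some (Event.read x d) ∧
    s tw ≤ jw ∧ (threads tw)[jw]? = some (Event.write x d') ∧
    ∀ j d'', jw < j → (threads tw)[j]? ≠ some (Event.write x d'')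

/-- Splitting a list into contiguous blocks immediately after each position in `cut`. -/
def splitAtCuts {α : Type} (l : List α) (cut : Finset ℕ) : List (List α) :=
  let cs := cut.sort (· ≤ ·)
  ((0 :: cs.map (· + 1)).zip (cs.map (· + 1) ++ [l.length])).map fun p => (l.take p.2).drop p.1


/-- Variables of the W[1]-hardness reduction program `P_G`. -/
inductive GVar (α : Type) (k : ℕ) where
  | y (e : Sym2 α)
  | x (j : Fin k)
  | s
  | p (j : ℕ)
deriving DecidableEq

/-- Thread identifiers of `P_G`. -/
inductive GTId (k : ℕ) where
  | init
  | checker (j : Fin k)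
  | sel (j : Fin k)
deriving DecidableEq

variable {α : Type} [Fintype α] [DecidableEq α]

/-- The list of edges of `G` incident on `v`. -/
noncomputable def incEdges (G : SimpleGraph α) [DecidableRel G.Adj] (v : α) : List (Sym2 α) :=
  (G.edgeFinset.filter fun e => v ∈ e).toList

/-- The `Init` thread of `P_G`. -/
noncomputable def initThread (G : SimpleGraph α) [DecidableRel G.Adj] (k : ℕ) :
    List (Event (GVar α k)) :=
  (G.edgeFinset.toList.map fun e => Event.write (GVar.y e) 0) ++
  ((List.finRange k).map fun j => Event.write (GVar.x j) 1) ++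
  [Event.write GVar.s 1, Event.write (GVar.p 0) 1]

/-- The thread `Checker_j` of `P_G`. -/
def checkerThread {k : ℕ} (j : Fin k) : List (Event (GVar α k)) :=
  [Event.read (GVar.p j.val) 1] ++
  (if j.val + 1 ≠ k then [Event.write GVar.s 0] else []) ++
  [Event.read (GVar.x j) 0] ++
  (if j.val + 1 = k then [Event.write GVar.s 1] else []) ++
  [Event.write (GVar.p (j.val + 1)) 1]

/-- The block `B_v^j` of selector thread `Sel_j` for vertex `v`. -/
noncomputable def selBlock (G : SimpleGraph α) [DecidableRel G.Adj] {k : ℕ} (j : Fin k) (v : α) :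
    List (Event (GVar α k)) :=
  ((incEdges G v).flatMap fun e => [Event.read (GVar.y e) 0, Event.write (GVar.y e) (j.val + 1)]) ++
  [Event.read GVar.s 1, Event.write (GVar.x j) 0, Event.write (GVar.x j) 1] ++
  ((incEdges G v).flatMap fun e => [Event.read (GVar.y e) (j.val + 1), Event.write (GVar.y e) 0])

/-- The selector thread `Sel_j` of `P_G`: one block per vertex of `G`. -/
noncomputable def selThread (G : SimpleGraph α) [DecidableRel G.Adj] {k : ℕ} (j : Fin k) :
    List (Event (GVar α k)) :=
  (Finset.univ : Finset α).toList.flatMap (selBlock G j)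

/-- The program `P_G` of the W[1]-hardness reduction with parameter `k`. -/
noncomputable def pgThreads (G : SimpleGraph α) [DecidableRel G.Adj] (k : ℕ) :
    GTId k → List (Event (GVar α k))
  | GTId.init => initThread G k
  | GTId.checker j => checkerThread j
  | GTId.sel j => selThread G j

namespace S11


variable [DecidableEq V]

abbrev Mem (V : Type) := V → Option ℕ

def mstep (m : Mem V) : Event V → Mem V
  | Event.read _ _ => m
  | Event.write x d => Function.update m x (some d)

def mupd (m : Mem V) (σ : List (Event V)) : Mem V := σ.foldl mstep m

def run (m : Mem V) : List (Event V) → Option (Mem V)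
  | [] => some m
  | Event.read x d :: t => if m x = some d then run m t else none
  | Event.write x d :: t => run (Function.update m x (some d)) t

@[simp] lemma run_nil (m : Mem V) : run m [] = some m := rfl

lemma run_cons_read {m : Mem V} {x d} (h : m x = some d) (t : List (Event V)) :
    run m (Event.read x d :: t) = run m t := by simp [run, h]

lemma run_cons_write (m : Mem V) (x : V) (d : ℕ) (t : List (Event V)) :
    run m (Event.write x d :: t) = run (Function.update m x (some d)) t := rfl

lemma run_append (A B : List (Event V)) : ∀ m : Mem V,
    run m (A ++ B) = (run m A).bind (fun m' => run m' B) := by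
  induction A with
  | nil => intro m; simp
  | cons e t ih =>
    intro m
    cases e with
    | read x d =>
      by_cases h : m x = some d
      · simp [run, h, ih]
      · simp [run, h]
    | write x d => simp [run, ih]

lemma mupd_append (m : Mem V) (A B : List (Event V)) :
    mupd m (A ++ B) = mupd (mupd m A) B := List.foldl_append ..

lemma mupd_cons (m : Mem V) (e : Event V) (t : List (Event V)) :
    mupd m (e :: t) = mupd (mstep m e) t := rfl

lemma run_read : ∀ {σ : List (Event V)} {m m' : Mem V} {p x d},
    run m σ = some m' → σ[p]? = some (Event.read x d) →
    mupd m (σ.take p) x = some d := by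
  intro σ
  induction σ with
  | nil => intro m m' p x d _ hp; simp at hp
  | cons e t ih =>
    intro m m' p x d hr hp
    cases p with
    | zero =>
      rw [List.getElem?_cons_zero, Option.some_inj] at hp; subst hp
      simp [run] at hr
      simpa [mupd] using hr.1
    | succ p =>
      rw [List.getElem?_cons_succ] at hp
      rw [List.take_succ_cons, mupd_cons]
      cases e with
      | read x' d' =>
        simp [run] at hr
        simpa [mstep] using ih hr.2 hp
      | write x' d' =>
        simp only [run] at hr
        simpa [mstep] using ih hr hp

lemma lastWrite_spec : ∀ (τ : List (Event V)) (x : V) (d : ℕ),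
    mupd (fun _ => none) τ x = some d →
    ∃ q, q < τ.length ∧ τ[q]? = some (Event.write x d) ∧
      ∀ r, q < r → r < τ.length → ∀ d', τ[r]? ≠ some (Event.write x d') := by
  intro τ
  induction τ using List.reverseRecOn with
  | nil => intro x d h; simp [mupd] at h
  | append_singleton τ e ih =>
    intro x d h
    rw [mupd_append] at h
    have hlen : (τ ++ [e]).length = τ.length + 1 := by simp
    have hlow : ∀ q < τ.length, (τ ++ [e])[q]? = τ[q]? := by
      intro q hq
      rw [List.getElem?_append_left hq]
    have hlast : (τ ++ [e])[τ.length]? = some e := by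
      simp
    have step : (∀ d', e ≠ Event.write x d') → mupd (mupd (fun _ => none) τ) [e] x = mupd (fun _ => none) τ x := by
      intro hne
      cases e with
      | read x' d' => simp [mupd, mstep]
      | write x' d' =>
        have hx : x' ≠ x := by
          intro hh; exact hne d' (by rw [hh])
        simp [mupd, mstep, Function.update_of_ne (Ne.symm hx)]
    by_cases hw : ∀ d', e ≠ Event.write x d'
    · rw [step hw] at h
      obtain ⟨q, hq, hget, hafter⟩ := ih x d h
      refine ⟨q, by omega, by rw [hlow q hq]; exact hget, ?_⟩
      intro r hqr hr d'
      rw [hlen] at hr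
      rcases lt_or_eq_of_le (Nat.lt_succ_iff.mp hr) with h' | h'
      · rw [hlow r h']; exact hafter r hqr h' d'
      · subst h'; rw [hlast]
        intro hh
        exact hw d' (Option.some_inj.mp hh)
    · push_neg at hw
      obtain ⟨d', hd'⟩ := hw
      subst hd'
      simp [mupd, mstep, Function.update_self] at h
      subst h
      refine ⟨τ.length, by omega, hlast, ?_⟩
      intro r hqr hr d''
      rw [hlen] at hr; omega

lemma SC_of_run {σ : List (Event V)} {m' : Mem V}
    (h : run (fun _ => none) σ = some m') : SC σ := by
  intro p x d hp
  have hmem := run_read h hp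
  have hplen : p < σ.length := by
    have := List.getElem?_eq_some_iff.mp hp
    exact this.choose
  have htlen : (σ.take p).length = p := by
    rw [List.length_take]; omega
  have htake : ∀ r < p, (σ.take p)[r]? = σ[r]? := by
    intro r hr
    rw [List.getElem?_take]
    simp [hr]
  obtain ⟨q, hq, hget, hafter⟩ := lastWrite_spec (σ.take p) x d hmem
  rw [htlen] at hq hafter
  refine ⟨q, hq, by rw [← htake q hq]; exact hget, ?_⟩
  intro r hqr hrp d' _ hcon
  exact hafter r hqr hrp d' (by rw [htake r hrp]; exact hcon)


lemma run_append_some {A B : List (Event V)} {m m₁ m₂ : Mem V}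
    (hA : run m A = some m₁) (hB : run m₁ B = some m₂) :
    run m (A ++ B) = some m₂ := by
  rw [run_append, hA]; exact hB

/-- Running a list of writes to pairwise-distinct fresh variables. -/
lemma run_map_writes (f : β → V) (c : β → ℕ) :
    ∀ (l : List β) (m : Mem V), ∃ m',
      run m (l.map fun a => Event.write (f a) (c a)) = some m' ∧
      (∀ z, z ∉ l.map f → m' z = m z) ∧
      (Function.Injective f → ∀ a ∈ l, m' (f a) = some (c a)) := by
  intro l
  induction l with
  | nil => intro m; exact ⟨m, rfl, fun z _ => rfl, fun _ a ha => absurd ha List.not_mem_nil⟩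
  | cons a t ih =>
    intro m
    obtain ⟨m', h1, h2, h3⟩ := ih (Function.update m (f a) (some (c a)))
    refine ⟨m', by rw [List.map_cons, run_cons_write]; exact h1, ?_, ?_⟩
    · intro z hz
      rw [List.map_cons, List.mem_cons] at hz
      push_neg at hz
      rw [h2 z hz.2, Function.update_of_ne hz.1]
    · intro hinj b hb
      rcases List.mem_cons.mp hb with rfl | hb
      · by_cases hbt : b ∈ t
        · exact h3 hinj b hbt
        · have : f b ∉ t.map f := by
            rw [List.mem_map]
            rintro ⟨u, hu, hub⟩
            exact hbt (hinj hub ▸ hu)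
          rw [h2 _ this, Function.update_self]
      · exact h3 hinj b hb

/-- Running a read-then-write pair for each element of a nodup list. -/
lemma run_rw (f : β → V) (d₁ d₂ : ℕ) (hf : Function.Injective f) :
    ∀ (l : List β) (m : Mem V), l.Nodup → (∀ a ∈ l, m (f a) = some d₁) →
      run m (l.flatMap fun a => [Event.read (f a) d₁, Event.write (f a) d₂]) =
        some (fun z => if z ∈ l.map f then some d₂ else m z) := by
  intro l
  induction l with
  | nil =>
    intro m _ _
    simp
  | cons a t ih =>
    intro m hnd hd
    rw [List.flatMap_cons, List.cons_append, List.cons_append, List.nil_append,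
      run_cons_read (hd a (List.mem_cons_self)), run_cons_write]
    rw [ih (Function.update m (f a) (some d₂)) hnd.of_cons ?hyp]
    case hyp =>
      intro b hb
      rw [Function.update_of_ne]
      · exact hd b (List.mem_cons_of_mem _ hb)
      · intro hcon
        exact (List.nodup_cons.mp hnd).1 (hf hcon ▸ hb)
    congr 1
    funext z
    by_cases hz : z ∈ t.map f
    · rw [if_pos hz, if_pos (by rw [List.map_cons]; exact List.mem_cons_of_mem _ hz)]
    · rw [if_neg hz]
      by_cases hza : z = f a
      · rw [if_pos (by rw [List.map_cons, hza]; exact List.mem_cons_self), hza,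
          Function.update_self]
      · rw [if_neg (by rw [List.map_cons, List.mem_cons]; push_neg; exact ⟨hza, hz⟩),
          Function.update_of_ne hza]

lemma run_flatMap_const (g : β → List (Event V)) {m : Mem V} :
    ∀ (l : List β), (∀ b ∈ l, run m (g b) = some m) →
      run m (l.flatMap g) = some m := by
  intro l
  induction l with
  | nil => intro _; simp
  | cons a t ih =>
    intro h
    rw [List.flatMap_cons]
    exact run_append_some (h a (List.mem_cons_self))
      (ih fun b hb => h b (List.mem_cons_of_mem _ hb))

/-- Running a `flatMap` over `finRange k` while maintaining an indexed invariant. -/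
lemma run_finRange_inv {k : ℕ} (P : ℕ → Mem V → Prop) (f : Fin k → List (Event V))
    (hstep : ∀ (t : Fin k) (m : Mem V), P t.val m →
      ∃ m', run m (f t) = some m' ∧ P (t.val + 1) m') :
    ∀ {m : Mem V}, P 0 m →
      ∃ m', run m ((List.finRange k).flatMap f) = some m' ∧ P k m' := by
  suffices h : ∀ (d n : ℕ) (hn : n + d = k) (m : Mem V), P n m →
      ∃ m', run m (((List.finRange k).drop n).flatMap f) = some m' ∧ P k m' by
    intro m hm
    simpa using h k 0 (by omega) m hm
  intro d
  induction d with
  | zero =>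
    intro n hn m hm
    rw [List.drop_eq_nil_of_le (by simp; omega)]
    exact ⟨m, by simp, by rwa [← hn, Nat.add_zero]⟩
  | succ d ihd =>
    intro n hn m hm
    have hnk : n < k := by omega
    have hdrop : (List.finRange k).drop n = ⟨n, hnk⟩ :: (List.finRange k).drop (n + 1) := by
      rw [List.drop_eq_getElem_cons (by simpa using hnk)]
      congr 1
      simp
    rw [hdrop, List.flatMap_cons]
    obtain ⟨m₁, h1, h2⟩ := hstep ⟨n, hnk⟩ m hm
    obtain ⟨m₂, h3, h4⟩ := ihd (n + 1) (by omega) m₁ h2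
    exact ⟨m₂, run_append_some h1 h3, h4⟩



def plSeq (plan : List (ι × List (Event V))) : List (ι × Event V) :=
  plan.flatMap fun p => p.2.map fun e => (p.1, e)

open Classical in
noncomputable def plCost : List (ι × List (Event V)) → ℕ
  | [] => 0
  | p :: rest => (if ∃ q ∈ rest, q.1 = p.1 ∧ q.2 ≠ [] then 1 else 0) + plCost rest

lemma plSeq_nil : plSeq ([] : List (ι × List (Event V))) = [] := rfl

lemma plSeq_cons (p : ι × List (Event V)) (rest : List (ι × List (Event V))) :
    plSeq (p :: rest) = p.2.map (fun e => (p.1, e)) ++ plSeq rest := by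
  simp [plSeq]

lemma map_snd_plSeq (plan : List (ι × List (Event V))) :
    (plSeq plan).map Prod.snd = plan.flatMap Prod.snd := by
  induction plan with
  | nil => rfl
  | cons p rest ih => simp [plSeq_cons, ih]

lemma filterMap_plSeq [DecidableEq ι] (plan : List (ι × List (Event V))) (i : ι) :
    (plSeq plan).filterMap (fun a => if a.1 = i then some a.2 else none) =
      plan.flatMap fun p => if p.1 = i then p.2 else [] := by
  induction plan with
  | nil => rfl
  | cons p rest ih =>
    rw [plSeq_cons, List.filterMap_append, List.flatMap_cons, ih]
    congr 1
    rw [List.filterMap_map]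
    by_cases hp : p.1 = i
    · simp [hp, Function.comp_def]
    · simp [hp, Function.comp_def]

lemma interleaving_of_plan [DecidableEq ι] (threads : ι → List (Event V))
    (plan : List (ι × List (Event V)))
    (h : ∀ i, (plan.flatMap fun p => if p.1 = i then p.2 else []) = threads i) :
    IsInterleaving threads (plSeq plan) := by
  intro i
  rw [filterMap_plSeq, h i]

open Classical

lemma numPreemptions_piece_append (i : ι) (es : List (Event V)) (τ : List (ι × Event V)) :
    numPreemptions (es.map (fun e => (i, e)) ++ τ) ≤
      (if ∃ c ∈ τ, c.1 = i then 1 else 0) + numPreemptions τ := by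
  set P := es.map (fun e => (i, e)) with hP
  set σ := P ++ τ with hσ
  have hn : σ.length = P.length + τ.length := by simp [hσ]
  have hlowfst : ∀ j (a : ι × Event V), j < P.length → σ[j]? = some a → a.1 = i := by
    intro j a hj ha
    rw [hσ, List.getElem?_append_left hj, hP,
      List.getElem?_map] at ha
    cases he : es[j]? with
    | none => rw [he] at ha; simp at ha
    | some e => rw [he] at ha; simp at ha; rw [← ha]
  have hhigh : ∀ j, P.length ≤ j → σ[j]? = τ[j - P.length]? := by
    intro j hj
    rw [hσ, List.getElem?_append_right hj]
  set T := (Finset.range τ.length).filter (fun j => PreemptionAt τ j) with hT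
  have hTcard : T.card = numPreemptions τ := rfl
  have key : ∀ j ∈ (Finset.range σ.length).filter (fun j => PreemptionAt σ j),
      (j = P.length - 1 ∧ (∃ c ∈ τ, c.1 = i)) ∨ j ∈ T.image (· + P.length) := by
    intro j hj
    rw [Finset.mem_filter, Finset.mem_range] at hj
    obtain ⟨hjlen, a, b, ha, hb, hne, r, c, hrj, hrc, hci⟩ := hj
    by_cases hjP : j < P.length
    · left
      have hai : a.1 = i := hlowfst j a hjP ha
      have hj1 : P.length ≤ j + 1 := by
        by_contra hlt
        push_neg at hlt
        exact hne (by rw [hai, hlowfst (j+1) b hlt hb])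
      have hrP : P.length ≤ r := by omega
      have hcτ : τ[r - P.length]? = some c := by rw [← hhigh r hrP]; exact hrc
      refine ⟨by omega, c, ?_, by rw [hci, hai]⟩
      · exact List.mem_of_getElem? hcτ
    · right
      push_neg at hjP
      rw [Finset.mem_image]
      refine ⟨j - P.length, ?_, by omega⟩
      rw [hT, Finset.mem_filter, Finset.mem_range]
      constructor
      · omega
      · refine ⟨a, b, ?_, ?_, hne, r - P.length, c, by omega, ?_, hci⟩
        · rw [← hhigh j hjP]; exact ha
        · have : j - P.length + 1 = (j + 1) - P.length := by omega
          rw [this, ← hhigh (j+1) (by omega)]; exact hb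
        · rw [← hhigh r (by omega)]; exact hrc
  by_cases hc : ∃ c ∈ τ, c.1 = i
  · rw [if_pos hc]
    calc numPreemptions σ
        ≤ (insert (P.length - 1) (T.image (· + P.length))).card := by
          apply Finset.card_le_card
          intro j hj
          rcases key j hj with ⟨h1, _⟩ | h2
          · rw [h1]; exact Finset.mem_insert_self _ _
          · exact Finset.mem_insert_of_mem h2
      _ ≤ 1 + (T.image (· + P.length)).card := by
          apply le_trans (Finset.card_insert_le _ _); omega
      _ ≤ 1 + numPreemptions τ := by
          rw [← hTcard]
          have := Finset.card_image_le (s := T) (f := (· + P.length))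
          omega
  · rw [if_neg hc]
    calc numPreemptions σ
        ≤ (T.image (· + P.length)).card := by
          apply Finset.card_le_card
          intro j hj
          rcases key j hj with ⟨_, h1⟩ | h2
          · exact absurd h1 hc
          · exact h2
      _ ≤ 0 + numPreemptions τ := by
          rw [← hTcard]
          have := Finset.card_image_le (s := T) (f := (· + P.length))
          omega

lemma numPreemptions_plSeq_le (plan : List (ι × List (Event V))) :
    numPreemptions (plSeq plan) ≤ plCost plan := by
  induction plan with
  | nil => simp [plSeq_nil, numPreemptions, plCost]; exact Finset.subset_empty.mp (Finset.filter_subset _ _)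
  | cons p rest ih =>
    rw [plSeq_cons]
    refine le_trans (numPreemptions_piece_append p.1 p.2 (plSeq rest)) ?_
    rw [plCost]
    have hmono : (if ∃ c ∈ plSeq rest, c.1 = p.1 then 1 else 0) ≤
        (if ∃ q ∈ rest, q.1 = p.1 ∧ q.2 ≠ [] then 1 else 0) := by
      split_ifs with h1 h2
      · omega
      · exfalso
        obtain ⟨c, hc, hcp⟩ := h1
        rw [plSeq, List.mem_flatMap] at hc
        obtain ⟨q, hq, hcq⟩ := hc
        rw [List.mem_map] at hcq
        obtain ⟨e, he, hec⟩ := hcq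
        exact h2 ⟨q, hq, by rw [← hec] at hcp; exact hcp, List.ne_nil_of_mem he⟩
      · omega
      · omega
    omega

lemma plCost_cons_le (p : ι × List (Event V)) (rest : List (ι × List (Event V))) :
    plCost (p :: rest) ≤ 1 + plCost rest := by
  rw [plCost]; split_ifs <;> omega

lemma plCost_cons_of_not (p : ι × List (Event V)) {rest : List (ι × List (Event V))}
    (h : ∀ q ∈ rest, q.1 ≠ p.1) : plCost (p :: rest) = plCost rest := by
  rw [plCost, if_neg, Nat.zero_add]
  rintro ⟨q, hq, hq1, -⟩
  exact h q hq hq1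

lemma plCost_append_le (l₁ l₂ : List (ι × List (Event V))) :
    plCost (l₁ ++ l₂) ≤ l₁.length + plCost l₂ := by
  induction l₁ with
  | nil => simp
  | cons a t ih =>
    rw [List.cons_append]
    refine le_trans (plCost_cons_le _ _) ?_
    simp only [List.length_cons]
    omega

lemma plCost_group_zero (l : List β) (f : β → ι × List (Event V))
    (l₂ : List (ι × List (Event V))) (hnd : l.Nodup)
    (hinj : ∀ a b, a ∈ l → b ∈ l → (f a).1 = (f b).1 → a = b)
    (hdis : ∀ a ∈ l, ∀ q ∈ l₂, q.1 ≠ (f a).1) :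
    plCost (l.map f ++ l₂) = plCost l₂ := by
  induction l with
  | nil => simp
  | cons a t ih =>
    rw [List.map_cons, List.cons_append, plCost_cons_of_not, ih hnd.of_cons]
    · intro x y hx hy
      exact hinj x y (List.mem_cons_of_mem _ hx) (List.mem_cons_of_mem _ hy)
    · intro x hx
      exact hdis x (List.mem_cons_of_mem _ hx)
    · intro q hq
      rw [List.mem_append] at hq
      rcases hq with hq | hq
      · rw [List.mem_map] at hq
        obtain ⟨b, hb, hbq⟩ := hq
        rw [← hbq]
        intro hcon
        have := hinj b a (List.mem_cons_of_mem _ hb) (List.mem_cons_self) hcon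
        subst this
        exact (List.nodup_cons.mp hnd).1 hb
      · exact hdis a (List.mem_cons_self) q hq

lemma bind_if_not_mem [DecidableEq β] {j : β} {t : List β} (h : j ∉ t)
    (g : β → List (Event V)) : (t.flatMap fun i => if i = j then g i else []) = [] := by
  induction t with
  | nil => rfl
  | cons a s ih =>
    rw [List.flatMap_cons, if_neg (by rintro rfl; exact h (List.mem_cons_self)),
      List.nil_append]
    exact ih (fun hj => h (List.mem_cons_of_mem _ hj))

lemma bind_if_single [DecidableEq β] {l : List β} {j : β} (hnd : l.Nodup) (hj : j ∈ l)
    (g : β → List (Event V)) : (l.flatMap fun i => if i = j then g i else []) = g j := by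
  induction l with
  | nil => simp at hj
  | cons a t ih =>
    rw [List.flatMap_cons]
    by_cases ha : a = j
    · subst ha
      rw [if_pos rfl, bind_if_not_mem (List.nodup_cons.mp hnd).1, List.append_nil]
    · rw [if_neg ha, List.nil_append]
      exact ih hnd.of_cons (by rcases List.mem_cons.mp hj with h | h; exact absurd h.symm ha; exact h)


section Program

variable {α : Type} [Fintype α] [DecidableEq α] {k : ℕ}

lemma mem_incEdges {G : SimpleGraph α} [DecidableRel G.Adj] {e : Sym2 α} {v : α} :
    e ∈ incEdges G v ↔ e ∈ G.edgeFinset ∧ v ∈ e := by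
  rw [incEdges, Finset.mem_toList, Finset.mem_filter]

lemma y_inj : Function.Injective (GVar.y (α := α) (k := k)) := by
  intro a b h; injection h

lemma x_inj : Function.Injective (GVar.x (α := α) (k := k)) := by
  intro a b h; injection h

lemma s_not_mem_y (l : List (Sym2 α)) : (GVar.s : GVar α k) ∉ l.map GVar.y := by
  simp [List.mem_map]

lemma x_not_mem_y (j : Fin k) (l : List (Sym2 α)) : (GVar.x j : GVar α k) ∉ l.map GVar.y := by
  simp [List.mem_map]

lemma p_not_mem_y (n : ℕ) (l : List (Sym2 α)) : (GVar.p n : GVar α k) ∉ l.map GVar.y := by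
  simp [List.mem_map]

lemma run_selBlock (G : SimpleGraph α) [DecidableRel G.Adj] (j : Fin k) (v : α)
    (m : Mem (GVar α k)) (hs : m GVar.s = some 1) (hx : m (GVar.x j) = some 1)
    (hy : ∀ e ∈ incEdges G v, m (GVar.y e) = some 0) :
    run m (selBlock G j v) = some m := by
  have hnd : (incEdges G v).Nodup := Finset.nodup_toList _
  set l := incEdges G v with hl
  set m₁ : Mem (GVar α k) := fun z => if z ∈ l.map GVar.y then some (j.val + 1) else m z with hm₁
  set m₂ : Mem (GVar α k) := Function.update m₁ (GVar.x j) (some 1) with hm₂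
  have h1 : run m (l.flatMap fun e => [Event.read (GVar.y e) 0, Event.write (GVar.y e) (j.val+1)])
      = some m₁ := run_rw GVar.y 0 (j.val+1) y_inj l m hnd hy
  have h2 : run m₁ [Event.read GVar.s 1, Event.write (GVar.x j) 0, Event.write (GVar.x j) 1]
      = some m₂ := by
    have hs₁ : m₁ GVar.s = some 1 := by
      simp only [hm₁]; rw [if_neg (s_not_mem_y l)]; exact hs
    rw [run_cons_read hs₁, run_cons_write, run_cons_write, run_nil,
      Function.update_idem]
  have h3 : run m₂ (l.flatMap fun e => [Event.read (GVar.y e) (j.val+1), Event.write (GVar.y e) 0])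
      = some (fun z => if z ∈ l.map GVar.y then some 0 else m₂ z) := by
    apply run_rw GVar.y (j.val+1) 0 y_inj l m₂ hnd
    intro e he
    rw [hm₂, Function.update_of_ne (by simp)]
    simp only [hm₁]
    rw [if_pos (List.mem_map.mpr ⟨e, he, rfl⟩)]
  have hfinal : (fun z => if z ∈ l.map GVar.y then some 0 else m₂ z) = m := by
    funext z
    by_cases hz : z ∈ l.map GVar.y
    · rw [if_pos hz]
      obtain ⟨e, he, rfl⟩ := List.mem_map.mp hz
      exact (hy e he).symm
    · rw [if_neg hz, hm₂, Function.update_apply]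
      by_cases hzx : z = GVar.x j
      · rw [if_pos hzx, hzx, hx]
      · rw [if_neg hzx]; simp only [hm₁]; rw [if_neg hz]
  simp only [selBlock, List.bind_eq_flatMap]
  exact run_append_some (run_append_some h1 h2) (hfinal ▸ h3)

lemma run_blocks (G : SimpleGraph α) [DecidableRel G.Adj] (j : Fin k) (vl : List α)
    {m : Mem (GVar α k)} (hs : m GVar.s = some 1) (hx : m (GVar.x j) = some 1)
    (hy : ∀ e ∈ G.edgeFinset, m (GVar.y e) = some 0) :
    run m (vl.flatMap (selBlock G j)) = some m := by
  apply run_flatMap_const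
  intro v _
  exact run_selBlock G j v m hs hx fun e he => hy e (mem_incEdges.mp he).1

lemma run_init (G : SimpleGraph α) [DecidableRel G.Adj] (k : ℕ) :
    ∃ M : Mem (GVar α k), run (fun _ => none) (initThread G k) = some M ∧
      M GVar.s = some 1 ∧ (∀ j : Fin k, M (GVar.x j) = some 1) ∧
      (∀ e ∈ G.edgeFinset, M (GVar.y e) = some 0) ∧
      (∀ n : ℕ, M (GVar.p n) = if n = 0 then some 1 else none) := by
  obtain ⟨m₁, hr₁, hn₁, hm₁⟩ := run_map_writes (GVar.y (α := α) (k := k)) (fun _ => 0)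
    G.edgeFinset.toList (fun _ => none)
  obtain ⟨m₂, hr₂, hn₂, hm₂⟩ := run_map_writes (GVar.x (α := α) (k := k)) (fun _ => 1)
    (List.finRange k) m₁
  set M : Mem (GVar α k) :=
    Function.update (Function.update m₂ GVar.s (some 1)) (GVar.p 0) (some 1) with hM
  refine ⟨M, ?_, ?_, ?_, ?_, ?_⟩
  · rw [initThread]
    refine run_append_some (run_append_some hr₁ hr₂) ?_
    rw [run_cons_write, run_cons_write, run_nil]
  · rw [hM, Function.update_of_ne (by simp), Function.update_self]
  · intro j
    rw [hM, Function.update_of_ne (by simp), Function.update_of_ne (by simp)]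
    exact hm₂ x_inj j (List.mem_finRange j)
  · intro e he
    rw [hM, Function.update_of_ne (by simp), Function.update_of_ne (by simp),
      hn₂ _ (by simp [List.mem_map])]
    exact hm₁ y_inj e (Finset.mem_toList.mpr he)
  · intro n
    by_cases hn : n = 0
    · rw [hn, if_pos rfl, hM, Function.update_self]
    · rw [if_neg hn, hM, Function.update_of_ne (by simp [hn]),
        Function.update_of_ne (by simp), hn₂ _ (by simp [List.mem_map]),
        hn₁ _ (by simp [List.mem_map])]

end Program

section Stages

variable {α : Type} [Fintype α] [DecidableEq α] {k : ℕ}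
variable (G : SimpleGraph α) [DecidableRel G.Adj] (v : Fin k → α)

/-- Piece 2 of selector `j`: `Start_{v j}`, `r(s,1)`, `w(x_j,0)`. -/
noncomputable def midE (j : Fin k) : List (Event (GVar α k)) :=
  ((incEdges G (v j)).flatMap fun e =>
    [Event.read (GVar.y e) 0, Event.write (GVar.y e) (j.val + 1)]) ++
  [Event.read GVar.s 1, Event.write (GVar.x j) 0]

/-- Piece 3a of selector `j`: `w(x_j,1)` and `Finish_{v j}`. -/
noncomputable def finE (j : Fin k) : List (Event (GVar α k)) :=
  Event.write (GVar.x j) 1 ::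
  ((incEdges G (v j)).flatMap fun e =>
    [Event.read (GVar.y e) (j.val + 1), Event.write (GVar.y e) 0])

def InvMid (t : ℕ) (m : Mem (GVar α k)) : Prop :=
  m GVar.s = some 1 ∧
  (∀ j : Fin k, m (GVar.x j) = some (if j.val < t then 0 else 1)) ∧
  (∀ j : Fin k, j.val < t → ∀ e ∈ incEdges G (v j), m (GVar.y e) = some (j.val + 1)) ∧
  (∀ e ∈ G.edgeFinset, (∀ j : Fin k, j.val < t → e ∉ incEdges G (v j)) →
    m (GVar.y e) = some 0) ∧
  (∀ n : ℕ, m (GVar.p n) = if n = 0 then some 1 else none)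

def ICheck (t : ℕ) (m : Mem (GVar α k)) : Prop :=
  m GVar.s = some (if t = 0 ∨ t = k then 1 else 0) ∧
  (∀ j : Fin k, m (GVar.x j) = some 0) ∧
  (∀ n : ℕ, m (GVar.p n) = if n ≤ t then some 1 else none) ∧
  (∀ j : Fin k, ∀ e ∈ incEdges G (v j), m (GVar.y e) = some (j.val + 1)) ∧
  (∀ e ∈ G.edgeFinset, (∀ j : Fin k, e ∉ incEdges G (v j)) → m (GVar.y e) = some 0)

def IFin (t : ℕ) (m : Mem (GVar α k)) : Prop :=
  m GVar.s = some 1 ∧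
  (∀ j : Fin k, m (GVar.x j) = some (if j.val < t then 1 else 0)) ∧
  (∀ j : Fin k, t ≤ j.val → ∀ e ∈ incEdges G (v j), m (GVar.y e) = some (j.val + 1)) ∧
  (∀ e ∈ G.edgeFinset, (∀ j : Fin k, t ≤ j.val → e ∉ incEdges G (v j)) →
    m (GVar.y e) = some 0)

variable {G v}
variable (hdis : ∀ i j : Fin k, i ≠ j → ∀ e, e ∈ incEdges G (v i) → e ∉ incEdges G (v j))

lemma mem_map_y {e : Sym2 α} {l : List (Sym2 α)} :
    (GVar.y e : GVar α k) ∈ l.map GVar.y ↔ e ∈ l :=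
  List.mem_map_of_injective y_inj

include hdis in
lemma run_mids {m : Mem (GVar α k)} (h0 : InvMid G v 0 m) :
    ∃ m', run m ((List.finRange k).flatMap (midE G v)) = some m' ∧ InvMid G v k m' := by
  refine run_finRange_inv (InvMid G v) (midE G v) ?_ h0
  intro t m hm
  obtain ⟨hs, hx, hy1, hy0, hp⟩ := hm
  have hy : ∀ e ∈ incEdges G (v t), m (GVar.y e) = some 0 := by
    intro e he
    refine hy0 e (mem_incEdges.mp he).1 ?_
    intro j hj hcon
    exact hdis j t (fun hh => by subst hh; omega) e hcon he
  set l := incEdges G (v t) with hl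
  have hnd : l.Nodup := Finset.nodup_toList _
  set m₁ : Mem (GVar α k) := fun z => if z ∈ l.map GVar.y then some (t.val + 1) else m z
    with hm₁
  set m₂ : Mem (GVar α k) := Function.update m₁ (GVar.x t) (some 0) with hm₂
  have hs₁ : m₁ GVar.s = some 1 := by
    simp only [hm₁]; rw [if_neg (s_not_mem_y l)]; exact hs
  refine ⟨m₂, ?_, ?_, ?_, ?_, ?_, ?_⟩
  · rw [midE]
    refine run_append_some (run_rw GVar.y 0 (t.val + 1) y_inj l m hnd hy) ?_
    rw [run_cons_read hs₁, run_cons_write, run_nil]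
  · rw [hm₂, Function.update_of_ne (by simp)]; exact hs₁
  · intro j
    by_cases hj : j = t
    · subst hj
      rw [hm₂, Function.update_self, if_pos (by omega)]
    · rw [hm₂, Function.update_of_ne (by simp [hj])]
      have : m₁ (GVar.x j) = m (GVar.x j) := by
        simp only [hm₁]; rw [if_neg (x_not_mem_y j l)]
      rw [this, hx j]
      have hvne : j.val ≠ t.val := fun hh => hj (Fin.ext hh)
      by_cases hlt : j.val < t.val
      · rw [if_pos hlt, if_pos (by omega)]
      · rw [if_neg hlt, if_neg (by omega)]
  · intro j hj e he
    by_cases hjt : j = t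
    · subst hjt
      rw [hm₂, Function.update_of_ne (by simp)]
      simp only [hm₁]
      rw [if_pos (mem_map_y.mpr he)]
    · have hjlt : j.val < t.val := by
        rcases Nat.lt_or_ge j.val t.val with h | h
        · exact h
        · exact absurd (Fin.ext (by omega : j.val = t.val)) hjt
      have hnotl : e ∉ l := fun hcon => hdis j t hjt e he hcon
      rw [hm₂, Function.update_of_ne (by simp)]
      simp only [hm₁]
      rw [if_neg (fun hc => hnotl (mem_map_y.mp hc))]
      exact hy1 j hjlt e he
  · intro e he hno
    have hnotl : e ∉ l := hno t (by omega)
    rw [hm₂, Function.update_of_ne (by simp)]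
    simp only [hm₁]
    rw [if_neg (fun hc => hnotl (mem_map_y.mp hc))]
    exact hy0 e he (fun j hj => hno j (by omega))
  · intro n
    rw [hm₂, Function.update_of_ne (by simp)]
    have : m₁ (GVar.p n) = m (GVar.p n) := by
      simp only [hm₁]; rw [if_neg (p_not_mem_y n l)]
    rw [this]; exact hp n

lemma run_checkers {m : Mem (GVar α k)} (h0 : ICheck G v 0 m) :
    ∃ m', run m ((List.finRange k).flatMap checkerThread) = some m' ∧ ICheck G v k m' := by
  refine run_finRange_inv (ICheck G v) checkerThread ?_ h0
  intro t m hm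
  obtain ⟨hs, hx, hp, hy1, hy0⟩ := hm
  have hpt : m (GVar.p t.val) = some 1 := by rw [hp t.val, if_pos (le_refl _)]
  by_cases hk : t.val + 1 = k
  · have hlist : checkerThread (α := α) t =
        [Event.read (GVar.p t.val) 1, Event.read (GVar.x t) 0,
         Event.write GVar.s 1, Event.write (GVar.p (t.val + 1)) 1] := by
      simp [checkerThread, hk]
    set m' : Mem (GVar α k) :=
      Function.update (Function.update m GVar.s (some 1)) (GVar.p (t.val + 1)) (some 1)
      with hm'
    refine ⟨m', ?_, ?_, ?_, ?_, ?_, ?_⟩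
    · rw [hlist, run_cons_read hpt, run_cons_read (hx t), run_cons_write,
        run_cons_write, run_nil]
    · rw [hm', Function.update_of_ne (by simp), Function.update_self,
        if_pos (Or.inr hk)]
    · intro j
      rw [hm', Function.update_of_ne (by simp), Function.update_of_ne (by simp)]
      exact hx j
    · intro n
      by_cases hn : n = t.val + 1
      · rw [hn, hm', Function.update_self, if_pos (le_refl _)]
      · rw [hm', Function.update_of_ne (by simp [hn]), Function.update_of_ne (by simp),
          hp n]
        by_cases hle : n ≤ t.val
        · rw [if_pos hle, if_pos (by omega)]
        · rw [if_neg hle, if_neg (by omega)]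
    · intro j e he
      rw [hm', Function.update_of_ne (by simp), Function.update_of_ne (by simp)]
      exact hy1 j e he
    · intro e he hno
      rw [hm', Function.update_of_ne (by simp), Function.update_of_ne (by simp)]
      exact hy0 e he hno
  · have hlist : checkerThread (α := α) t =
        [Event.read (GVar.p t.val) 1, Event.write GVar.s 0,
         Event.read (GVar.x t) 0, Event.write (GVar.p (t.val + 1)) 1] := by
      simp [checkerThread, hk]
    set m' : Mem (GVar α k) :=
      Function.update (Function.update m GVar.s (some 0)) (GVar.p (t.val + 1)) (some 1)
      with hm'
    refine ⟨m', ?_, ?_, ?_, ?_, ?_, ?_⟩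
    · rw [hlist, run_cons_read hpt, run_cons_write,
        run_cons_read (by rw [Function.update_of_ne (by simp)]; exact hx t),
        run_cons_write, run_nil]
    · rw [hm', Function.update_of_ne (by simp), Function.update_self,
        if_neg (by omega)]
    · intro j
      rw [hm', Function.update_of_ne (by simp), Function.update_of_ne (by simp)]
      exact hx j
    · intro n
      by_cases hn : n = t.val + 1
      · rw [hn, hm', Function.update_self, if_pos (le_refl _)]
      · rw [hm', Function.update_of_ne (by simp [hn]), Function.update_of_ne (by simp),
          hp n]
        by_cases hle : n ≤ t.val
        · rw [if_pos hle, if_pos (by omega)]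
        · rw [if_neg hle, if_neg (by omega)]
    · intro j e he
      rw [hm', Function.update_of_ne (by simp), Function.update_of_ne (by simp)]
      exact hy1 j e he
    · intro e he hno
      rw [hm', Function.update_of_ne (by simp), Function.update_of_ne (by simp)]
      exact hy0 e he hno

include hdis in
lemma run_fins {m : Mem (GVar α k)} (h0 : IFin G v 0 m) :
    ∃ m', run m ((List.finRange k).flatMap (finE G v)) = some m' ∧ IFin G v k m' := by
  refine run_finRange_inv (IFin G v) (finE G v) ?_ h0
  intro t m hm
  obtain ⟨hs, hx, hy1, hy0⟩ := hm
  set l := incEdges G (v t) with hl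
  have hnd : l.Nodup := Finset.nodup_toList _
  set m₁ : Mem (GVar α k) := Function.update m (GVar.x t) (some 1) with hm₁
  have hyt : ∀ e ∈ l, m₁ (GVar.y e) = some (t.val + 1) := by
    intro e he
    rw [hm₁, Function.update_of_ne (by simp)]
    exact hy1 t (le_refl _) e he
  set m₂ : Mem (GVar α k) := fun z => if z ∈ l.map GVar.y then some 0 else m₁ z with hm₂
  refine ⟨m₂, ?_, ?_, ?_, ?_, ?_⟩
  · rw [finE, run_cons_write]
    exact run_rw GVar.y (t.val + 1) 0 y_inj l _ hnd hyt
  · simp only [hm₂]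
    rw [if_neg (s_not_mem_y l), hm₁, Function.update_of_ne (by simp)]
    exact hs
  · intro j
    simp only [hm₂]
    rw [if_neg (x_not_mem_y j l)]
    by_cases hj : j = t
    · subst hj
      rw [hm₁, Function.update_self, if_pos (by omega)]
    · rw [hm₁, Function.update_of_ne (by simp [hj]), hx j]
      have hvne : j.val ≠ t.val := fun hh => hj (Fin.ext hh)
      by_cases hlt : j.val < t.val
      · rw [if_pos hlt, if_pos (by omega)]
      · rw [if_neg hlt, if_neg (by omega)]
  · intro j hj e he
    have hjt : j ≠ t := fun hh => by subst hh; omega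
    have hnotl : e ∉ l := fun hcon => hdis j t hjt e he hcon
    simp only [hm₂]
    rw [if_neg (fun hc => hnotl (mem_map_y.mp hc)), hm₁,
      Function.update_of_ne (by simp)]
    exact hy1 j (by omega) e he
  · intro e he hno
    simp only [hm₂]
    by_cases hel : e ∈ l
    · rw [if_pos (mem_map_y.mpr hel)]
    · rw [if_neg (fun hc => hel (mem_map_y.mp hc)), hm₁,
        Function.update_of_ne (by simp)]
      refine hy0 e he ?_
      intro j hj
      by_cases hjt : j = t
      · subst hjt; exact hel
      · exact hno j (by have : j.val ≠ t.val := fun hh => hjt (Fin.ext hh); omega)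

end Stages

lemma flatMap_const_nil {β : Type} {V : Type} (l : List β) :
    (l.flatMap fun _ => ([] : List (Event V))) = [] := by
  induction l with
  | nil => rfl
  | cons a t ih => rw [List.flatMap_cons, List.nil_append, ih]

end S11

open S11 in
/-- if `G` has an independent set of size `k`, then `P_G` has an SC
interleaving with at most `3k` preemptions. -/
theorem stmt11 (G : SimpleGraph α) [DecidableRel G.Adj] (k : ℕ)
    (I : Finset α) (hcard : I.card = k)
    (hind : ∀ a ∈ I, ∀ b ∈ I, ¬ G.Adj a b) :
    ∃ σ : List (GTId k × Event (GVar α k)),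
      IsInterleaving (pgThreads G k) σ ∧
      SC (σ.map Prod.snd) ∧
      numPreemptions σ ≤ 3 * k := by
  classical
  have hlen : I.toList.length = k := by rw [Finset.length_toList, hcard]
  set v : Fin k → α := fun j => I.toList.get (Fin.cast hlen.symm j) with hv
  have hvinj : Function.Injective v := by
    intro a b hab
    have h1 := List.nodup_iff_injective_get.mp I.nodup_toList hab
    exact Fin.ext (by simpa using congrArg Fin.val h1)
  have hvI : ∀ j, v j ∈ I := fun j => Finset.mem_toList.mp (List.get_mem _ _)
  have hdis : ∀ i j : Fin k, i ≠ j → ∀ e, e ∈ incEdges G (v i) → e ∉ incEdges G (v j) := by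
    intro i j hne e hei hej
    obtain ⟨heE, hvi⟩ := mem_incEdges.mp hei
    obtain ⟨-, hvj⟩ := mem_incEdges.mp hej
    have hvne : v i ≠ v j := fun hh => hne (hvinj hh)
    have he : e = s(v i, v j) := (Sym2.mem_and_mem_iff hvne).mp ⟨hvi, hvj⟩
    rw [SimpleGraph.mem_edgeFinset, he, SimpleGraph.mem_edgeSet] at heE
    exact hind _ (hvI i) _ (hvI j) heE
  choose A B hAB using fun j : Fin k =>
    List.append_of_mem (Finset.mem_toList.mpr (Finset.mem_univ (v j)))
  -- the labelled pieces of the schedule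
  set g1 : List (GTId k × List (Event (GVar α k))) :=
    (List.finRange k).map fun j => (GTId.sel j, (A j).flatMap (selBlock G j)) with hg1
  set g2 : List (GTId k × List (Event (GVar α k))) :=
    (List.finRange k).map fun j => (GTId.sel j, midE G v j) with hg2
  set g3 : List (GTId k × List (Event (GVar α k))) :=
    (List.finRange k).map fun j => (GTId.checker j, checkerThread j) with hg3
  set g4 : List (GTId k × List (Event (GVar α k))) :=
    (List.finRange k).map fun j => (GTId.sel j, finE G v j) with hg4
  set g5 : List (GTId k × List (Event (GVar α k))) :=
    (List.finRange k).map fun j => (GTId.sel j, (B j).flatMap (selBlock G j)) with hg5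
  set plan : List (GTId k × List (Event (GVar α k))) :=
    (GTId.init, initThread G k) :: (g1 ++ (g2 ++ (g3 ++ (g4 ++ g5)))) with hplan
  refine ⟨plSeq plan, ?_, ?_, ?_⟩
  · -- interleaving
    apply interleaving_of_plan
    intro i
    have hsel : ∀ j : Fin k, selThread G j =
        (A j).flatMap (selBlock G j) ++
          (midE G v j ++ (finE G v j ++ (B j).flatMap (selBlock G j))) := by
      intro j
      rw [selThread, hAB j]
      simp [selBlock, midE, finE, List.bind_eq_flatMap, List.flatMap_append,
        List.flatMap_cons, List.append_assoc]
    rw [hplan, hg1, hg2, hg3, hg4, hg5]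
    simp only [List.flatMap_cons, List.flatMap_append, List.flatMap_map, Function.comp_def]
    cases i with
    | init =>
      simp [pgThreads, flatMap_const_nil]
    | checker jj =>
      simp [pgThreads, flatMap_const_nil,
        bind_if_single (List.nodup_finRange k) (List.mem_finRange jj)]
    | sel jj =>
      simp [pgThreads, flatMap_const_nil,
        bind_if_single (List.nodup_finRange k) (List.mem_finRange jj), hsel jj]
  · -- sequential consistency
    rw [map_snd_plSeq, hplan, hg1, hg2, hg3, hg4, hg5]
    simp only [List.flatMap_cons, List.flatMap_append, List.flatMap_map, Function.comp_def]
    obtain ⟨M, hrM, hMs, hMx, hMy, hMp⟩ := run_init G k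
    have hpre : run M ((List.finRange k).flatMap fun j => (A j).flatMap (selBlock G j)) =
        some M := by
      apply run_flatMap_const
      intro j _
      exact run_blocks G j (A j) hMs (hMx j) hMy
    have hInvMid0 : InvMid G v 0 M := by
      refine ⟨hMs, fun j => by simpa using hMx j, fun j hj => by omega, fun e he _ => hMy e he, hMp⟩
    obtain ⟨M₂, hrM₂, hI₂⟩ := run_mids hdis hInvMid0
    obtain ⟨hs₂, hx₂, hy₂, hy₂', hp₂⟩ := hI₂
    have hICheck0 : ICheck G v 0 M₂ := by
      refine ⟨by simpa using hs₂, fun j => by simpa [j.isLt] using hx₂ j, ?_, ?_, ?_⟩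
      · intro n
        rw [hp₂ n]
        by_cases hn : n = 0
        · rw [if_pos hn, if_pos (by omega)]
        · rw [if_neg hn, if_neg (by omega)]
      · intro j e he
        exact hy₂ j j.isLt e he
      · intro e he hno
        exact hy₂' e he (fun j _ => hno j)
    obtain ⟨M₃, hrM₃, hI₃⟩ := run_checkers hICheck0
    obtain ⟨hs₃, hx₃, hp₃, hy₃, hy₃'⟩ := hI₃
    have hIFin0 : IFin G v 0 M₃ := by
      refine ⟨by simpa using hs₃, fun j => by simpa using hx₃ j, fun j _ => hy₃ j, ?_⟩
      intro e he hno
      exact hy₃' e he (fun j => hno j (Nat.zero_le _))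
    obtain ⟨M₄, hrM₄, hI₄⟩ := run_fins hdis hIFin0
    obtain ⟨hs₄, hx₄, hy₄, hy₄'⟩ := hI₄
    have hx₄' : ∀ j : Fin k, M₄ (GVar.x j) = some 1 := by
      intro j
      rw [hx₄ j, if_pos j.isLt]
    have hy₄'' : ∀ e ∈ G.edgeFinset, M₄ (GVar.y e) = some 0 := by
      intro e he
      exact hy₄' e he (fun j hj => absurd hj (by omega))
    have hpost : run M₄ ((List.finRange k).flatMap fun j => (B j).flatMap (selBlock G j)) =
        some M₄ := by
      apply run_flatMap_const
      intro j _
      exact run_blocks G j (B j) hs₄ (hx₄' j) hy₄''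
    exact SC_of_run (run_append_some hrM (run_append_some hpre
      (run_append_some hrM₂ (run_append_some hrM₃ (run_append_some hrM₄ hpost)))))
  · -- preemption bound
    refine le_trans (numPreemptions_plSeq_le plan) ?_
    rw [hplan]
    have hhead : ∀ q ∈ g1 ++ (g2 ++ (g3 ++ (g4 ++ g5))),
        q.1 ≠ (GTId.init : GTId k) := by
      intro q hq
      simp only [hg1, hg2, hg3, hg4, hg5, List.mem_append, List.mem_map] at hq
      rcases hq with ⟨j,_,rfl⟩ | ⟨j,_,rfl⟩ | ⟨j,_,rfl⟩ | ⟨j,_,rfl⟩ | ⟨j,_,rfl⟩ <;> simp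
    rw [plCost_cons_of_not _ hhead]
    have hlen1 : g1.length = k := by rw [hg1]; simp
    have hlen2 : g2.length = k := by rw [hg2]; simp
    have hlen4 : g4.length = k := by rw [hg4]; simp
    have h3 : plCost (g3 ++ (g4 ++ g5)) = plCost (g4 ++ g5) := by
      rw [hg3]
      apply plCost_group_zero _ _ _ (List.nodup_finRange k)
      · intro a b _ _ hab
        simpa using hab
      · intro a _ q hq
        simp only [hg4, hg5, List.mem_append, List.mem_map] at hq
        rcases hq with ⟨j,_,rfl⟩ | ⟨j,_,rfl⟩ <;> simp
    have h5 : plCost g5 = 0 := by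
      have := plCost_group_zero (List.finRange k)
        (fun j => (GTId.sel j, (B j).flatMap (selBlock G j))) []
        (List.nodup_finRange k)
        (by intro a b _ _ hab; simpa using hab)
        (by intro a _ q hq; simp at hq)
      rw [hg5]
      rw [List.append_nil] at this
      rw [this]
      rfl
    calc plCost (g1 ++ (g2 ++ (g3 ++ (g4 ++ g5))))
        ≤ g1.length + plCost (g2 ++ (g3 ++ (g4 ++ g5))) := plCost_append_le _ _
      _ ≤ g1.length + (g2.length + plCost (g3 ++ (g4 ++ g5))) := by
          have := plCost_append_le g2 (g3 ++ (g4 ++ g5)); omega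
      _ = g1.length + (g2.length + plCost (g4 ++ g5)) := by rw [h3]
      _ ≤ g1.length + (g2.length + (g4.length + plCost g5)) := by
          have := plCost_append_le g4 g5; omega
      _ ≤ 3 * k := by rw [hlen1, hlen2, hlen4, h5]; omega
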